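/- Let m ≥ 1 be an integer. The function ψ : [0, π] → ℝ defined by ψ(α) = (−1)^r·cos(mα) − 2r for α ∈ [rπ/m, (r+1)π/m], r ∈ {0, 1, …, m−1}, satisfies ψ(α) ≤ cos(α) for every α ∈ [0, π]; hence the margin-enforcing loss penalizes the true class at least as much as the standard softmax loss does. -/
import Mathlib


open Real Set

/-- for an integer `m ≥ 1`, any function `ψ : ℝ → ℝ` satisfying
`ψ(α) = (−1)^r·cos(mα) − 2r` on `[rπ/m, (r+1)π/m]` for every `r ∈ {0,…,m−1}` satisfies
`ψ(α) ≤ cos(α)` for every `α ∈ [0, π]`. -/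
theorem psi_le_cos (m : ℕ) (hm : 1 ≤ m) (ψ : ℝ → ℝ)
    (hψ : ∀ r : ℕ, r ≤ m - 1 →
      ∀ α ∈ Icc ((r : ℝ) * π / m) (((r : ℝ) + 1) * π / m),
        ψ α = (-1 : ℝ) ^ r * Real.cos (m * α) - 2 * r) :
    ∀ α ∈ Icc (0 : ℝ) π, ψ α ≤ Real.cos α := by
  intro α hα
  obtain ⟨hα0, hαπ⟩ := hα
  have hπ := Real.pi_pos
  have hm0 : (0:ℝ) < m := by exact_mod_cast Nat.lt_of_lt_of_le Nat.zero_lt_one hm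
  set x := (m : ℝ) * α / π with hx
  have hx0 : 0 ≤ x := by positivity
  have hxm : x ≤ m := by
    rw [hx, div_le_iff₀ hπ]
    nlinarith
  set r := min (Nat.floor x) (m - 1) with hr
  have hrm : r ≤ m - 1 := min_le_right _ _
  have hrx : (r : ℝ) ≤ x := by
    have h1 : (r : ℝ) ≤ (Nat.floor x : ℝ) := by exact_mod_cast min_le_left _ _
    exact h1.trans (Nat.floor_le hx0)
  have hlow : (r : ℝ) * π / m ≤ α := by
    rw [div_le_iff₀ hm0]
    rw [hx, le_div_iff₀ hπ] at hrx
    nlinarith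
  have hxr1 : x ≤ (r : ℝ) + 1 := by
    by_cases h : Nat.floor x ≤ m - 1
    · have hreq : r = Nat.floor x := min_eq_left h
      rw [hreq]
      exact (Nat.lt_floor_add_one x).le
    · have hreq : r = m - 1 := min_eq_right (le_of_not_ge h)
      have : ((m - 1 : ℕ) : ℝ) + 1 = m := by
        have : (m - 1) + 1 = m := Nat.succ_pred_eq_of_pos hm
        exact_mod_cast congrArg (Nat.cast : ℕ → ℝ) this
      rw [hreq, this]
      exact hxm
  have hhigh : α ≤ ((r : ℝ) + 1) * π / m := by
    rw [le_div_iff₀ hm0]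
    rw [hx, div_le_iff₀ hπ] at hxr1
    nlinarith
  have heq := hψ r hrm α ⟨hlow, hhigh⟩
  rw [heq]
  rcases Nat.eq_zero_or_pos r with hr0 | hr1
  · -- r = 0 : need cos (m α) ≤ cos α
    rw [hr0] at hhigh ⊢
    simp only [Nat.cast_zero, pow_zero, one_mul, mul_zero, sub_zero]
    have hmαπ : (m : ℝ) * α ≤ π := by
      rw [Nat.cast_zero, zero_add, one_mul] at hhigh
      rw [le_div_iff₀ hm0] at hhigh
      linarith
    have hαmα : α ≤ (m : ℝ) * α := by
      nlinarith [show (1:ℝ) ≤ m by exact_mod_cast hm]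
    exact Real.cos_le_cos_of_nonneg_of_le_pi hα0 hmαπ hαmα
  · have h1 : (1 : ℝ) ≤ r := by exact_mod_cast hr1
    have hc1 : Real.cos ((m:ℝ) * α) ≤ 1 := Real.cos_le_one _
    have hc2 : -1 ≤ Real.cos ((m:ℝ) * α) := Real.neg_one_le_cos _
    have hc3 : -1 ≤ Real.cos α := Real.neg_one_le_cos _
    rcases Nat.even_or_odd r with he | ho
    · rw [he.neg_one_pow]
      nlinarith
    · rw [ho.neg_one_pow]
      nlinarith
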